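/- In the binary peer-prediction model, suppose the strategy profile (θ_1, …, θ_n) is an equilibrium. Then for every agent i and each b ∈ {0,1}: if (1/(n−1))·Σ_{k≠i} q̂_k(1|b) < q*, then θ_i(1|b) = 0; and if (1/(n−1))·Σ_{k≠i} q̂_k(1|b) > q*, then θ_i(1|b) = 1. -/

import Mathlib

open Finset

noncomputable section

/-- A real function is affine. -/
def IsAffineFn (f : ℝ → ℝ) : Prop := ∃ a b : ℝ, ∀ x, f x = a * x + b

/-- A (mixed) strategy `s = (θ(1|0), θ(1|1))` is valid if both coordinates lie in `[0,1]`. -/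
def ValidStrat (s : ℝ × ℝ) : Prop := s.1 ∈ Set.Icc (0 : ℝ) 1 ∧ s.2 ∈ Set.Icc (0 : ℝ) 1

/-- Induced report probability `q̂(1|0) = θ(1|0)·q00 + θ(1|1)·q10`, where `q00 = 1 - q10`. -/
def qhat0 (q10 : ℝ) (s : ℝ × ℝ) : ℝ := s.1 * (1 - q10) + s.2 * q10

/-- Induced report probability `q̂(1|1) = θ(1|0)·q01 + θ(1|1)·q11`, where `q01 = 1 - q11`. -/
def qhat1 (q11 : ℝ) (s : ℝ × ℝ) : ℝ := s.1 * (1 - q11) + s.2 * q11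

/-- Expected payoff of agent `i` under profile `θ`, where `ℓ0 = ℓ(·,0)` and `ℓ1 = ℓ(·,1)`
are the two payoff functions of the mechanism,
`q1 = q10/(1 - q11 + q10)` is the marginal probability of signal `1` and `q0 = 1 - q1`:
`ν_i(θ) = Σ_{b∈{0,1}} q_b·[(1−θ_i(1|b))·(1/(n−1))Σ_{j≠i} ℓ(q̂_j(1|b),0)
                           + θ_i(1|b)·(1/(n−1))Σ_{j≠i} ℓ(q̂_j(1|b),1)]`. -/
def payoff (n : ℕ) (q10 q11 : ℝ) (ℓ0 ℓ1 : ℝ → ℝ) (θ : Fin n → ℝ × ℝ) (i : Fin n) : ℝ :=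
  (1 - q10 / (1 - q11 + q10)) *
      ((1 - (θ i).1) * (((n : ℝ) - 1)⁻¹ * ∑ j ∈ univ.erase i, ℓ0 (qhat0 q10 (θ j)))
        + (θ i).1 * (((n : ℝ) - 1)⁻¹ * ∑ j ∈ univ.erase i, ℓ1 (qhat0 q10 (θ j))))
    + (q10 / (1 - q11 + q10)) *
      ((1 - (θ i).2) * (((n : ℝ) - 1)⁻¹ * ∑ j ∈ univ.erase i, ℓ0 (qhat1 q11 (θ j)))
        + (θ i).2 * (((n : ℝ) - 1)⁻¹ * ∑ j ∈ univ.erase i, ℓ1 (qhat1 q11 (θ j))))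

/-- `θ` is a (Bayesian Nash) equilibrium of the peer-prediction mechanism: every agent plays
a valid strategy, and no agent can improve her expected payoff by a unilateral deviation. -/
def IsEquilibrium (n : ℕ) (q10 q11 : ℝ) (ℓ0 ℓ1 : ℝ → ℝ) (θ : Fin n → ℝ × ℝ) : Prop :=
  (∀ i, ValidStrat (θ i)) ∧
  ∀ (i : Fin n) (s : ℝ × ℝ), ValidStrat s →
    payoff n q10 q11 ℓ0 ℓ1 θ i ≥ payoff n q10 q11 ℓ0 ℓ1 (Function.update θ i s) i

set_option maxHeartbeats 2000000 in
/-- **Best-response criterion (Claim 2.7).**  In the binary peer-prediction model, if the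
profile `θ` is an equilibrium then for every agent `i` and each signal `b ∈ {0,1}`:
if `(1/(n−1))·Σ_{k≠i} q̂_k(1|b) < q*` then `θ_i(1|b) = 0`, and if
`(1/(n−1))·Σ_{k≠i} q̂_k(1|b) > q*` then `θ_i(1|b) = 1`. -/
theorem equilibrium_best_response_criterion (n : ℕ) (hn : 2 ≤ n) (q10 q11 : ℝ)
    (hq10 : 0 < q10) (hcorr : q10 < q11) (hq11 : q11 < 1)
    (ℓ0 ℓ1 : ℝ → ℝ) (haff0 : IsAffineFn ℓ0) (haff1 : IsAffineFn ℓ1)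
    (hproper0 : ℓ0 q10 > ℓ1 q10) (hproper1 : ℓ1 q11 > ℓ0 q11)
    (qs : ℝ) (hqs : qs ∈ Set.Ioo q10 q11) (hbe : ℓ0 qs = ℓ1 qs)
    (θ : Fin n → ℝ × ℝ) (heq : IsEquilibrium n q10 q11 ℓ0 ℓ1 θ) (i : Fin n) :
    ((((n : ℝ) - 1)⁻¹ * ∑ k ∈ univ.erase i, qhat0 q10 (θ k) < qs → (θ i).1 = 0) ∧
     (((n : ℝ) - 1)⁻¹ * ∑ k ∈ univ.erase i, qhat0 q10 (θ k) > qs → (θ i).1 = 1)) ∧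
    ((((n : ℝ) - 1)⁻¹ * ∑ k ∈ univ.erase i, qhat1 q11 (θ k) < qs → (θ i).2 = 0) ∧
     (((n : ℝ) - 1)⁻¹ * ∑ k ∈ univ.erase i, qhat1 q11 (θ k) > qs → (θ i).2 = 1)) := by
  obtain ⟨a0, b0, h0⟩ := haff0
  obtain ⟨a1, b1, h1⟩ := haff1
  obtain ⟨hvalid, hopt⟩ := heq
  obtain ⟨hqs1, hqs2⟩ := hqs
  set m : ℝ := (n : ℝ) - 1 with hm
  have hm1 : (1:ℝ) ≤ m := by
    have h2n : (2:ℝ) ≤ (n:ℝ) := by exact_mod_cast hn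
    rw [hm]; linarith
  have hmne : m ≠ 0 := by linarith
  have hc : 0 < a1 - a0 := by
    have hA := hproper0; have hB := hproper1
    rw [h0, h1] at hA hB
    nlinarith [hA, hB, hcorr]
  have hd : a1 * qs + b1 - (a0 * qs + b0) = 0 := by
    have := hbe; rw [h0, h1] at this; linarith
  set q1v : ℝ := q10 / (1 - q11 + q10) with hq1v
  have hden : 0 < 1 - q11 + q10 := by linarith
  have hq1pos : 0 < q1v := div_pos hq10 hden
  have hq1lt : q1v < 1 := by rw [hq1v, div_lt_one hden]; linarith
  set A0 : ℝ := ∑ k ∈ univ.erase i, qhat0 q10 (θ k) with hA0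
  set A1 : ℝ := ∑ k ∈ univ.erase i, qhat1 q11 (θ k) with hA1
  set B0 : ℝ := m⁻¹ * A0 with hB0
  set B1 : ℝ := m⁻¹ * A1 with hB1
  have hcard : ((univ.erase i).card : ℝ) = m := by
    rw [card_erase_of_mem (mem_univ i), card_univ, Fintype.card_fin,
      Nat.cast_sub (by omega : 1 ≤ n)]
    simp [hm]
  set F : ℝ × ℝ → ℝ := fun s =>
    (1 - q1v) * ((1 - s.1) * (a0 * B0 + b0) + s.1 * (a1 * B0 + b1))
    + q1v * ((1 - s.2) * (a0 * B1 + b0) + s.2 * (a1 * B1 + b1)) with hF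
  have hform : ∀ φ : Fin n → ℝ × ℝ, (∀ j, j ≠ i → φ j = θ j) →
      payoff n q10 q11 ℓ0 ℓ1 φ i = F (φ i) := by
    intro φ hφ
    have eq0 : ∀ j ∈ univ.erase i, qhat0 q10 (φ j) = qhat0 q10 (θ j) := fun j hj => by
      rw [hφ j (Finset.ne_of_mem_erase hj)]
    have eq1 : ∀ j ∈ univ.erase i, qhat1 q11 (φ j) = qhat1 q11 (θ j) := fun j hj => by
      rw [hφ j (Finset.ne_of_mem_erase hj)]
    have e00 : ∑ j ∈ univ.erase i, ℓ0 (qhat0 q10 (φ j)) = a0 * A0 + m * b0 := by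
      rw [Finset.sum_congr rfl (fun j hj => by rw [eq0 j hj])]
      simp only [h0]
      rw [Finset.sum_add_distrib, ← Finset.mul_sum, Finset.sum_const, nsmul_eq_mul, hcard,
        ← hA0]
    have e10 : ∑ j ∈ univ.erase i, ℓ1 (qhat0 q10 (φ j)) = a1 * A0 + m * b1 := by
      rw [Finset.sum_congr rfl (fun j hj => by rw [eq0 j hj])]
      simp only [h1]
      rw [Finset.sum_add_distrib, ← Finset.mul_sum, Finset.sum_const, nsmul_eq_mul, hcard,
        ← hA0]
    have e01 : ∑ j ∈ univ.erase i, ℓ0 (qhat1 q11 (φ j)) = a0 * A1 + m * b0 := by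
      rw [Finset.sum_congr rfl (fun j hj => by rw [eq1 j hj])]
      simp only [h0]
      rw [Finset.sum_add_distrib, ← Finset.mul_sum, Finset.sum_const, nsmul_eq_mul, hcard,
        ← hA1]
    have e11 : ∑ j ∈ univ.erase i, ℓ1 (qhat1 q11 (φ j)) = a1 * A1 + m * b1 := by
      rw [Finset.sum_congr rfl (fun j hj => by rw [eq1 j hj])]
      simp only [h1]
      rw [Finset.sum_add_distrib, ← Finset.mul_sum, Finset.sum_const, nsmul_eq_mul, hcard,
        ← hA1]
    rw [payoff, e00, e10, e01, e11, ← hm, ← hq1v, hF]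
    simp only
    rw [hB0, hB1]
    field_simp
  have hineq : ∀ s : ℝ × ℝ, ValidStrat s → F (θ i) ≥ F s := by
    intro s hs
    have hI := hopt i s hs
    rw [hform θ (fun _ _ => rfl),
      hform (Function.update θ i s) (fun j hj => Function.update_of_ne hj _ _)] at hI
    rwa [Function.update_self] at hI
  have ht0 : 0 ≤ (θ i).1 := (hvalid i).1.1
  have ht1 : (θ i).1 ≤ 1 := (hvalid i).1.2
  have hu0 : 0 ≤ (θ i).2 := (hvalid i).2.1
  have hu1 : (θ i).2 ≤ 1 := (hvalid i).2.2
  have hw0 : 0 < 1 - q1v := by linarith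
  refine ⟨⟨?_, ?_⟩, ?_, ?_⟩
  · intro h
    have hI := hineq (0, (θ i).2) ⟨⟨le_refl 0, zero_le_one⟩, (hvalid i).2⟩
    have hE : F (θ i) - F (0, (θ i).2)
        = (1 - q1v) * ((θ i).1 * ((a1 - a0) * (B0 - qs))) := by
      rw [hF]; simp only
      linear_combination ((1 - q1v) * (θ i).1) * hd
    have h2 : 0 ≤ (1 - q1v) * ((θ i).1 * ((a1 - a0) * (B0 - qs))) := by
      rw [← hE]; linarith
    have h3 : 0 ≤ (θ i).1 * ((a1 - a0) * (B0 - qs)) := by nlinarith [h2, hw0]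
    have h4 : (θ i).1 ≤ 0 := by nlinarith [h3, mul_pos hc (sub_pos.mpr h)]
    linarith
  · intro h
    have hI := hineq (1, (θ i).2) ⟨⟨zero_le_one, le_refl 1⟩, (hvalid i).2⟩
    have hE : F (θ i) - F (1, (θ i).2)
        = (1 - q1v) * (((θ i).1 - 1) * ((a1 - a0) * (B0 - qs))) := by
      rw [hF]; simp only
      linear_combination ((1 - q1v) * ((θ i).1 - 1)) * hd
    have h2 : 0 ≤ (1 - q1v) * (((θ i).1 - 1) * ((a1 - a0) * (B0 - qs))) := by
      rw [← hE]; linarith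
    have h3 : 0 ≤ ((θ i).1 - 1) * ((a1 - a0) * (B0 - qs)) := by nlinarith [h2, hw0]
    have h4 : 1 ≤ (θ i).1 := by nlinarith [h3, mul_pos hc (sub_pos.mpr h)]
    linarith
  · intro h
    have hI := hineq ((θ i).1, 0) ⟨(hvalid i).1, ⟨le_refl 0, zero_le_one⟩⟩
    have hE : F (θ i) - F ((θ i).1, 0)
        = q1v * ((θ i).2 * ((a1 - a0) * (B1 - qs))) := by
      rw [hF]; simp only
      linear_combination (q1v * (θ i).2) * hd
    have h2 : 0 ≤ q1v * ((θ i).2 * ((a1 - a0) * (B1 - qs))) := by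
      rw [← hE]; linarith
    have h3 : 0 ≤ (θ i).2 * ((a1 - a0) * (B1 - qs)) := by nlinarith [h2, hq1pos]
    have h4 : (θ i).2 ≤ 0 := by nlinarith [h3, mul_pos hc (sub_pos.mpr h)]
    linarith
  · intro h
    have hI := hineq ((θ i).1, 1) ⟨(hvalid i).1, ⟨zero_le_one, le_refl 1⟩⟩
    have hE : F (θ i) - F ((θ i).1, 1)
        = q1v * (((θ i).2 - 1) * ((a1 - a0) * (B1 - qs))) := by
      rw [hF]; simp only
      linear_combination (q1v * ((θ i).2 - 1)) * hd
    have h2 : 0 ≤ q1v * (((θ i).2 - 1) * ((a1 - a0) * (B1 - qs))) := by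
      rw [← hE]; linarith
    have h3 : 0 ≤ ((θ i).2 - 1) * ((a1 - a0) * (B1 - qs)) := by nlinarith [h2, hq1pos]
    have h4 : 1 ≤ (θ i).2 := by nlinarith [h3, mul_pos hc (sub_pos.mpr h)]
    linarith
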